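/- Let h⁰, h¹, h² ∈ H₁(T², ℤ) ≅ ℤ² be the homology classes of the three streets, with h¹ = (u, v) and h² = (−w, −y) where (u,v), (w,y) are the minimal pairs defined by 0 < u|a| − v|b| < m and 0 < y|b| − w|a| < m. Then h¹ and −h² = (w, y) form a basis of ℤ², i.e. u·y − v·w = ±1 with u·y − v·w = 1. -/

import Mathlib

/-- Extract first-coordinate inequality from a lex inequality on ℕ ×ₗ ℕ. -/
lemma stmt7_lex_fst {a b c d : ℕ} (h : (toLex (a, b) : ℕ ×ₗ ℕ) ≤ toLex (c, d)) : a ≤ c := by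
  rcases (Prod.Lex.toLex_le_toLex (x := (a, b)) (y := (c, d))).mp h with h | ⟨h, _⟩ <;> omega

/-- Extract second-coordinate inequality from a lex inequality on ℕ ×ₗ ℕ when firsts agree. -/
lemma stmt7_lex_snd {a b c d : ℕ} (h : (toLex (a, b) : ℕ ×ₗ ℕ) ≤ toLex (c, d))
    (h2 : c ≤ a) : b ≤ d := by
  rcases (Prod.Lex.toLex_le_toLex (x := (a, b)) (y := (c, d))).mp h with h | ⟨h, h'⟩ <;> omega

/-- The homology classes h¹ = (u, v) and −h² = (w, y) of the streets form a basis of ℤ²: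
the determinant u·y − v·w equals 1. -/
theorem stmt7 (a b m : ℝ) (ha : 0 < a) (hb : 0 < b) (hm : 0 < m)
    (hm' : m < a + b) (hirr : Irrational (a / b)) (u v w y : ℕ)
    (hu : 0 < u) (huv : 0 < u * a - v * b ∧ u * a - v * b < m)
    (huvmin : ∀ u' v' : ℕ, 0 < u' → 0 < u' * a - v' * b → u' * a - v' * b < m →
      (toLex (u, v) : ℕ ×ₗ ℕ) ≤ toLex (u', v'))
    (hy : 0 < y) (hwy : 0 < y * b - w * a ∧ y * b - w * a < m)
    (hwymin : ∀ w' y' : ℕ, 0 < y' → 0 < y' * b - w' * a → y' * b - w' * a < m →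
      (toLex (w, y) : ℕ ×ₗ ℕ) ≤ toLex (w', y')) :
    (u : ℤ) * y - v * w = 1 := by
  obtain ⟨hα0, hαm⟩ := huv
  obtain ⟨hβ0, hβm⟩ := hwy
  obtain ⟨D, hDdef⟩ : ∃ D : ℤ, D = (u : ℤ) * y - v * w := ⟨_, rfl⟩
  rw [← hDdef]
  have huZ : (1 : ℤ) ≤ u := by exact_mod_cast hu
  have hyZ : (1 : ℤ) ≤ y := by exact_mod_cast hy
  have hwZ : (0 : ℤ) ≤ w := by positivity
  have hvZ : (0 : ℤ) ≤ v := by positivity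
  -- D > 0 since D * a = y * α + v * β > 0
  have hDa : (D : ℝ) * a = (y : ℝ) * ((u : ℝ) * a - v * b) + (v : ℝ) * ((y : ℝ) * b - w * a) := by
    rw [hDdef]; push_cast; ring
  have hD : 0 < D := by
    by_contra h
    push_neg at h
    have hDR : (D : ℝ) ≤ 0 := by exact_mod_cast h
    have h1 : 0 < (y : ℝ) * ((u : ℝ) * a - v * b) :=
      mul_pos (by exact_mod_cast hy) hα0
    have h2 : 0 ≤ (v : ℝ) * ((y : ℝ) * b - w * a) := mul_nonneg (by positivity) hβ0.le
    nlinarith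
  -- suppose D ≥ 2 and derive a contradiction
  by_contra hne
  have hD2 : 2 ≤ D := by omega
  -- find S, T
  obtain ⟨S, T, hS0, hSD, hT0, hTD, hST, hdvd1, hdvd2⟩ :
      ∃ S T : ℤ, 0 ≤ S ∧ S < D ∧ 0 ≤ T ∧ T < D ∧ ¬(S = 0 ∧ T = 0) ∧
        D ∣ S * u + T * w ∧ D ∣ S * v + T * y := by
    have hDne : D ≠ 0 := by omega
    by_cases hc : D ∣ (y : ℤ) ∧ D ∣ (v : ℤ)
    · refine ⟨(-(w : ℤ)) % D, (u : ℤ) % D, Int.emod_nonneg _ hDne, Int.emod_lt_of_pos _ hD,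
        Int.emod_nonneg _ hDne, Int.emod_lt_of_pos _ hD, ?_, ?_, ?_⟩
      · rintro ⟨h1, h2⟩
        have hdw : D ∣ (w : ℤ) := dvd_neg.mp (Int.dvd_of_emod_eq_zero h1)
        have hdu : D ∣ (u : ℤ) := Int.dvd_of_emod_eq_zero h2
        have h3 : D * D ∣ (u : ℤ) * y := mul_dvd_mul hdu hc.1
        have h4 : D * D ∣ (v : ℤ) * w := mul_dvd_mul hc.2 hdw
        have h5 : D * D ∣ D := by
          have := dvd_sub h3 h4
          rwa [← hDdef] at this
        have := Int.le_of_dvd hD h5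
        nlinarith
      · exact ⟨-((-(w : ℤ)) / D * u) - (u : ℤ) / D * w, by
          rw [Int.emod_def, Int.emod_def]; ring⟩
      · exact ⟨1 - (-(w : ℤ)) / D * v - (u : ℤ) / D * y, by
          rw [Int.emod_def, Int.emod_def, hDdef]; ring⟩
    · refine ⟨(y : ℤ) % D, (-(v : ℤ)) % D, Int.emod_nonneg _ hDne, Int.emod_lt_of_pos _ hD,
        Int.emod_nonneg _ hDne, Int.emod_lt_of_pos _ hD, ?_, ?_, ?_⟩
      · rintro ⟨h1, h2⟩
        exact hc ⟨Int.dvd_of_emod_eq_zero h1, dvd_neg.mp (Int.dvd_of_emod_eq_zero h2)⟩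
      · exact ⟨1 - (y : ℤ) / D * u - (-(v : ℤ)) / D * w, by
          rw [Int.emod_def, Int.emod_def, hDdef]; ring⟩
      · exact ⟨-((y : ℤ) / D * v) - (-(v : ℤ)) / D * y, by
          rw [Int.emod_def, Int.emod_def]; ring⟩
  -- the lattice point p, q
  obtain ⟨p, hp⟩ : ∃ p : ℤ, D * p = S * u + T * w := ⟨_, Int.mul_ediv_cancel' hdvd1⟩
  obtain ⟨q, hq⟩ : ∃ q : ℤ, D * q = S * v + T * y := ⟨_, Int.mul_ediv_cancel' hdvd2⟩
  have hp0 : 0 ≤ p := by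
    have h1 : D * 0 ≤ D * p := by
      rw [mul_zero, hp]
      exact add_nonneg (mul_nonneg hS0 (by positivity)) (mul_nonneg hT0 hwZ)
    exact le_of_mul_le_mul_left h1 hD
  have hq0 : 0 ≤ q := by
    have h1 : D * 0 ≤ D * q := by
      rw [mul_zero, hq]
      exact add_nonneg (mul_nonneg hS0 hvZ) (mul_nonneg hT0 (by positivity))
    exact le_of_mul_le_mul_left h1 hD
  have hDR : (0 : ℝ) < (D : ℝ) := by exact_mod_cast hD
  have hpR : (D : ℝ) * p = S * u + T * w := by exact_mod_cast hp
  have hqR : (D : ℝ) * q = S * v + T * y := by exact_mod_cast hq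
  have hSR : (0 : ℝ) ≤ (S : ℝ) := by exact_mod_cast hS0
  have hTR : (0 : ℝ) ≤ (T : ℝ) := by exact_mod_cast hT0
  have hSDR : (S : ℝ) < D := by exact_mod_cast hSD
  have hTDR : (T : ℝ) < D := by exact_mod_cast hTD
  have hXval : (D : ℝ) * ((p : ℝ) * a - q * b)
      = S * ((u : ℝ) * a - v * b) - T * ((y : ℝ) * b - w * a) := by
    linear_combination a * hpR - b * hqR
  have hpc : ((p.toNat : ℕ) : ℝ) = (p : ℝ) := by exact_mod_cast Int.toNat_of_nonneg hp0
  have hqc : ((q.toNat : ℕ) : ℝ) = (q : ℝ) := by exact_mod_cast Int.toNat_of_nonneg hq0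
  rcases lt_trichotomy ((p : ℝ) * a - q * b) 0 with hX | hX | hX
  · -- Case X < 0
    have hT1 : 0 < T := by
      by_contra h
      push_neg at h
      have hT0' : T = 0 := le_antisymm h hT0
      have h2 : (D : ℝ) * ((p : ℝ) * a - q * b) = S * ((u : ℝ) * a - v * b) := by
        rw [hT0'] at hXval
        push_cast at hXval
        linarith [hXval]
      have h3 : 0 ≤ (S : ℝ) * ((u : ℝ) * a - v * b) := mul_nonneg hSR hα0.le
      have h4 : (D : ℝ) * ((p : ℝ) * a - q * b) < 0 := mul_neg_of_pos_of_neg hDR hX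
      linarith
    have hq1 : 0 < q := by
      have h2 : D * 0 < D * q := by
        rw [mul_zero, hq]
        have h3 : (0 : ℤ) ≤ S * v := mul_nonneg hS0 hvZ
        have h4 : (0 : ℤ) < T * y := mul_pos hT1 (by omega)
        linarith
      exact lt_of_mul_lt_mul_left h2 hD.le
    have hXβ : -((p : ℝ) * a - q * b) < (y : ℝ) * b - w * a := by
      have h1 : (D : ℝ) * (((p : ℝ) * a - q * b) + ((y : ℝ) * b - w * a))
          = S * ((u : ℝ) * a - v * b) + ((D : ℝ) - T) * ((y : ℝ) * b - w * a) := by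
        linear_combination hXval
      have h2 : (D : ℝ) * 0 < (D : ℝ) * (((p : ℝ) * a - q * b) + ((y : ℝ) * b - w * a)) := by
        rw [mul_zero, h1]
        have h3 := mul_nonneg hSR hα0.le
        have h4 := mul_pos (show (0 : ℝ) < (D : ℝ) - T by linarith) hβ0
        linarith
      have := lt_of_mul_lt_mul_left h2 hDR.le
      linarith
    have hXm : -((p : ℝ) * a - q * b) < m := by linarith
    have hlex := hwymin p.toNat q.toNat (by omega)
      (by rw [hpc, hqc]; linarith) (by rw [hpc, hqc]; linarith)
    have hwp : (w : ℤ) ≤ p := by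
      have := stmt7_lex_fst hlex
      omega
    rcases eq_or_lt_of_le hwp with heq | hlt
    · -- p = w : contradiction via second lex coordinate
      have hyq : y ≤ q.toNat := stmt7_lex_snd hlex (by omega)
      have hyqR : (y : ℝ) ≤ (q : ℝ) := by exact_mod_cast (show (y : ℤ) ≤ q by omega)
      have hpw : (p : ℝ) = (w : ℝ) := by exact_mod_cast heq.symm
      have hXw : (p : ℝ) * a = (w : ℝ) * a := by rw [hpw]
      have := mul_le_mul_of_nonneg_right hyqR hb.le
      linarith
    · -- w < p
      have hpwc : (((p - w).toNat : ℕ) : ℝ) = (p : ℝ) - w := by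
        exact_mod_cast Int.toNat_of_nonneg (show (0 : ℤ) ≤ p - w by omega)
      have hpwR : (0 : ℝ) < (p : ℝ) - w := by
        have h1 : (0 : ℤ) < p - w := by omega
        exact_mod_cast h1
      have hupw : (u : ℤ) ≤ p - w := by
        by_cases hqy : (y : ℤ) ≤ q
        · have hqyc : (((q - y).toNat : ℕ) : ℝ) = (q : ℝ) - y := by
            exact_mod_cast Int.toNat_of_nonneg (show (0 : ℤ) ≤ q - y by omega)
          have hlex2 := huvmin (p - w).toNat (q - y).toNat (by omega)
            (by rw [hpwc, hqyc]; linarith) (by rw [hpwc, hqyc]; linarith)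
          have := stmt7_lex_fst hlex2
          omega
        · push_neg at hqy
          have hqyR : (q : ℝ) < (y : ℝ) := by exact_mod_cast hqy
          have hqyb := mul_neg_of_neg_of_pos (show (q : ℝ) - y < 0 by linarith) hb
          have hpwa := mul_pos hpwR ha
          have hlex2 := huvmin (p - w).toNat 0 (by omega)
            (by rw [hpwc]; push_cast; linarith)
            (by rw [hpwc]; push_cast; linarith)
          have := stmt7_lex_fst hlex2
          omega
      have e1 : D * (p - w) = S * u + (T - D) * w := by linear_combination hp
      have f1 : (T - D) * (w : ℤ) ≤ (-1) * w :=
        mul_le_mul_of_nonneg_right (by omega) hwZ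
      have f2 : S * (u : ℤ) ≤ (D - 1) * u :=
        mul_le_mul_of_nonneg_right (by omega) (by positivity)
      have f3 : D * (u : ℤ) ≤ D * (p - w) := mul_le_mul_of_nonneg_left hupw hD.le
      linarith
  · -- Case X = 0 : contradicts irrationality (or S = T = 0)
    have hpq : (p : ℝ) * a = q * b := by linarith
    rcases eq_or_lt_of_le hp0 with hp' | hp'
    · -- p = 0, hence q = 0, hence S = T = 0
      have hpR0 : (p : ℝ) = 0 := by exact_mod_cast hp'.symm
      have hqR0 : (q : ℝ) = 0 := by
        have h1 : (q : ℝ) * b = 0 := by rw [← hpq, hpR0, zero_mul]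
        rcases mul_eq_zero.mp h1 with h | h
        · exact h
        · exact absurd h hb.ne'
      have hqZ0 : q = 0 := by exact_mod_cast hqR0
      have h0 : S * (u : ℤ) + T * w = 0 := by rw [← hp, ← hp', mul_zero]
      have h0' : S * (v : ℤ) + T * y = 0 := by rw [← hq, hqZ0, mul_zero]
      have hSu : S * (u : ℤ) = 0 := by
        have h1 : (0 : ℤ) ≤ S * u := mul_nonneg hS0 (by positivity)
        have h2 : (0 : ℤ) ≤ T * w := mul_nonneg hT0 hwZ
        linarith
      have hTy : T * (y : ℤ) = 0 := by
        have h1 : (0 : ℤ) ≤ S * v := mul_nonneg hS0 hvZ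
        have h2 : (0 : ℤ) ≤ T * y := mul_nonneg hT0 (by positivity)
        linarith
      have hS' : S = 0 := by
        rcases mul_eq_zero.mp hSu with h | h
        · exact h
        · omega
      have hT' : T = 0 := by
        rcases mul_eq_zero.mp hTy with h | h
        · exact h
        · omega
      exact hST ⟨hS', hT'⟩
    · -- p > 0 : a / b is rational, contradiction
      have hpRpos : (0 : ℝ) < (p : ℝ) := by exact_mod_cast hp'
      refine hirr ⟨(q : ℚ) / (p : ℚ), ?_⟩
      push_cast
      rw [div_eq_div_iff hpRpos.ne' hb.ne']
      linarith [hpq]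
  · -- Case X > 0
    have hS1 : 0 < S := by
      by_contra h
      push_neg at h
      have hS0' : S = 0 := le_antisymm h hS0
      have h2 : (D : ℝ) * ((p : ℝ) * a - q * b) = -(T * ((y : ℝ) * b - w * a)) := by
        rw [hS0'] at hXval
        push_cast at hXval
        linarith [hXval]
      have h3 : 0 ≤ (T : ℝ) * ((y : ℝ) * b - w * a) := mul_nonneg hTR hβ0.le
      have h4 : (0 : ℝ) < (D : ℝ) * ((p : ℝ) * a - q * b) := mul_pos hDR hX
      linarith
    have hp1 : 0 < p := by
      have h2 : D * 0 < D * p := by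
        rw [mul_zero, hp]
        have h3 : (0 : ℤ) ≤ T * w := mul_nonneg hT0 hwZ
        have h4 : (0 : ℤ) < S * u := mul_pos hS1 (by omega)
        linarith
      exact lt_of_mul_lt_mul_left h2 hD.le
    have hXα : (p : ℝ) * a - q * b < (u : ℝ) * a - v * b := by
      have h1 : (D : ℝ) * (((u : ℝ) * a - v * b) - ((p : ℝ) * a - q * b))
          = ((D : ℝ) - S) * ((u : ℝ) * a - v * b) + T * ((y : ℝ) * b - w * a) := by
        linear_combination -hXval
      have h2 : (D : ℝ) * 0 < (D : ℝ) * (((u : ℝ) * a - v * b) - ((p : ℝ) * a - q * b)) := by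
        rw [mul_zero, h1]
        have h3 := mul_pos (show (0 : ℝ) < (D : ℝ) - S by linarith) hα0
        have h4 := mul_nonneg hTR hβ0.le
        linarith
      have := lt_of_mul_lt_mul_left h2 hDR.le
      linarith
    have hXm : (p : ℝ) * a - q * b < m := by linarith
    have hlex := huvmin p.toNat q.toNat (by omega)
      (by rw [hpc, hqc]; exact hX) (by rw [hpc, hqc]; exact hXm)
    have hup : (u : ℤ) ≤ p := by
      have := stmt7_lex_fst hlex
      omega
    have hupR : (u : ℝ) ≤ (p : ℝ) := by exact_mod_cast hup
    have hvq : (v : ℤ) < q := by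
      by_contra h
      push_neg at h
      have hR : (q : ℝ) ≤ (v : ℝ) := by exact_mod_cast h
      have g1 := mul_nonneg (sub_nonneg.mpr hupR) ha.le
      have g2 := mul_le_mul_of_nonneg_right hR hb.le
      linarith
    have hpuc : (((p - u).toNat : ℕ) : ℝ) = (p : ℝ) - u := by
      exact_mod_cast Int.toNat_of_nonneg (show (0 : ℤ) ≤ p - u by omega)
    have hqvc : (((q - v).toNat : ℕ) : ℝ) = (q : ℝ) - v := by
      exact_mod_cast Int.toNat_of_nonneg (show (0 : ℤ) ≤ q - v by omega)
    have hlex2 := hwymin (p - u).toNat (q - v).toNat (by omega)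
      (by rw [hpuc, hqvc]; linarith) (by rw [hpuc, hqvc]; linarith)
    have hwpu : (w : ℤ) ≤ p - u := by
      have := stmt7_lex_fst hlex2
      omega
    have e1 : D * (p - u) = (S - D) * u + T * w := by linear_combination hp
    have f1 : (S - D) * (u : ℤ) ≤ (-1) * u :=
      mul_le_mul_of_nonneg_right (by omega) (by positivity)
    have f2 : T * (w : ℤ) ≤ (D - 1) * w :=
      mul_le_mul_of_nonneg_right (by omega) hwZ
    have f3 : D * (w : ℤ) ≤ D * (p - u) := mul_le_mul_of_nonneg_left hwpu hD.le
    linarith
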